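/- Let (Ω, ℙ) be a probability space, S a standard Borel space, X : Ω → S a random element with distribution μ, and E : Ω → ℝ a random variable independent of X whose distribution has density p with respect to Lebesgue measure. Let g : ℝ × S → ℝ be measurable such that for each x ∈ S the map u ↦ g(u, x) is a strictly increasing differentiable bijection of ℝ with everywhere positive derivative ∂ᵤg(u, x); write g⁻¹(·, x) for its inverse. Define C = g(E, X) and the weight function ω(x, c) = p(g⁻¹(c, x)) / ∂ᵤg(g⁻¹(c, x), x). Then for (law of C)-almost every c ∈ ℝ, the regular conditional distribution of X given C = c is the normalized reweighted measure: condDistrib X C ℙ (c) = (μ.withDensity (x ↦ ω(x, c)) univ)⁻¹ • μ.withDensity (x ↦ ω(x, c)). In particular the conditional distribution of X given C = c has density proportional to x ↦ ω(x, c) with respect to μ. -/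

import Mathlib

open MeasureTheory ProbabilityTheory
open scoped ENNReal


set_option maxHeartbeats 1000000 in
lemma aux_map_withDensity (p : ℝ → ℝ) (f f' finv : ℝ → ℝ)
    (hf_meas : Measurable f)
    (hderiv : ∀ u, HasDerivAt f (f' u) u)
    (hpos : ∀ u, 0 < f' u)
    (hmono : StrictMono f)
    (hbij : Function.Bijective f)
    (hleft : ∀ u, finv (f u) = u) :
    (volume.withDensity (fun u => ENNReal.ofReal (p u))).map f
      = volume.withDensity (fun c => ENNReal.ofReal (p (finv c) / f' (finv c))) := by
  ext A hA
  have hs : MeasurableSet (f ⁻¹' A) := hf_meas hA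
  rw [Measure.map_apply hf_meas hA, withDensity_apply _ hs, withDensity_apply _ hA]
  have himg : f '' (f ⁻¹' A) = A := hbij.surjective.image_preimage A
  calc ∫⁻ u in f ⁻¹' A, ENNReal.ofReal (p u)
      = ∫⁻ u in f ⁻¹' A,
          ENNReal.ofReal |(ContinuousLinearMap.toSpanSingleton ℝ (f' u)).det|
            * ENNReal.ofReal (p (finv (f u)) / f' (finv (f u))) := by
        refine setLIntegral_congr_fun hs (fun u _ => ?_)
        rw [hleft u, ContinuousLinearMap.det_toSpanSingleton, abs_of_pos (hpos u),
          ← ENNReal.ofReal_mul (hpos u).le]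
        congr 1
        rw [mul_comm, div_mul_cancel₀ _ (hpos u).ne']
    _ = ∫⁻ c in f '' (f ⁻¹' A), ENNReal.ofReal (p (finv c) / f' (finv c)) := by
        rw [MeasureTheory.lintegral_image_eq_lintegral_abs_det_fderiv_mul volume hs
          (fun u _ => (hderiv u).hasFDerivAt.hasFDerivWithinAt)
          hmono.injective.injOn (fun c => ENNReal.ofReal (p (finv c) / f' (finv c)))]
    _ = ∫⁻ c in A, ENNReal.ofReal (p (finv c) / f' (finv c)) := by rw [himg]

/-- **Conditional distribution of the preceding variables given a continuous condition
(single-condition instance of the paper's Lemma 2).**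
With `C = g (E, X)` as in the u-monotonic model, for `(law of C)`-almost every `c` the
regular conditional distribution of `X` given `C = c` is the normalization of
`μ.withDensity (x ↦ ω (x, c))` where `ω (x, c) = p (gInv (c, x)) / g' (gInv (c, x), x)`. -/
theorem condDistrib_eq_normalized_weighted_prior
    {Ω S : Type*} [MeasurableSpace Ω] [MeasurableSpace S] [StandardBorelSpace S] [Nonempty S]
    (P : Measure Ω) [IsProbabilityMeasure P]
    (X : Ω → S) (hX : Measurable X)
    (μ : Measure S) (hμ : μ = P.map X)
    (E : Ω → ℝ) (hE : Measurable E)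
    (hindep : IndepFun E X P)
    (p : ℝ → ℝ) (hp_meas : Measurable p) (hp_nonneg : ∀ x, 0 ≤ p x)
    (hE_law : P.map E = volume.withDensity (fun u => ENNReal.ofReal (p u)))
    (g : ℝ × S → ℝ) (g' : ℝ × S → ℝ) (gInv : ℝ × S → ℝ)
    (hg_meas : Measurable g) (hg'_meas : Measurable g') (hgInv_meas : Measurable gInv)
    (hg_deriv : ∀ x u, HasDerivAt (fun u => g (u, x)) (g' (u, x)) u)
    (hg'_pos : ∀ x u, 0 < g' (u, x))
    (hg_mono : ∀ x, StrictMono (fun u => g (u, x)))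
    (hg_bij : ∀ x, Function.Bijective (fun u => g (u, x)))
    (hgInv_left : ∀ x u, gInv (g (u, x), x) = u)
    (hgInv_right : ∀ x c, g (gInv (c, x), x) = c)
    (C : Ω → ℝ) (hC : C = fun ω => g (E ω, X ω)) :
    ∀ᵐ c ∂(P.map C),
      condDistrib X C P c =
        ((μ.withDensity
            (fun x => ENNReal.ofReal (p (gInv (c, x)) / g' (gInv (c, x), x)))) Set.univ)⁻¹ •
          μ.withDensity
            (fun x => ENNReal.ofReal (p (gInv (c, x)) / g' (gInv (c, x), x))) := by
  have hμprob : IsProbabilityMeasure μ := hμ ▸ Measure.isProbabilityMeasure_map hX.aemeasurable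
  have hC_meas : Measurable C := hC ▸ hg_meas.comp (hE.prodMk hX)
  -- weight function
  set w : ℝ → S → ℝ≥0∞ :=
    fun c x => ENNReal.ofReal (p (gInv (c, x)) / g' (gInv (c, x), x)) with hw
  have hw_meas : Measurable (Function.uncurry w) := by
    apply ENNReal.measurable_ofReal.comp
    exact (hp_meas.comp hgInv_meas).div (hg'_meas.comp (hgInv_meas.prodMk measurable_snd))
  -- kernels
  set η : Kernel ℝ S := Kernel.withDensity (Kernel.const ℝ μ) w with hη
  have hη_apply : ∀ c, η c = μ.withDensity (w c) := by
    intro c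
    rw [hη, Kernel.withDensity_apply _ hw_meas, Kernel.const_apply]
  set κ : Kernel ℝ S := ⟨fun c => (η c Set.univ)⁻¹ • η c, by
    refine Measure.measurable_of_measurable_coe _ (fun s hs => ?_)
    simp only [Measure.smul_apply, smul_eq_mul]
    exact ((η.measurable_coe MeasurableSet.univ).inv).mul (η.measurable_coe hs)⟩ with hκ
  have hκ_apply : ∀ c, κ c = (η c Set.univ)⁻¹ • η c := fun c => rfl
  have hκ_fin : IsFiniteKernel κ := by
    refine ⟨1, ENNReal.one_lt_top, fun c => ?_⟩
    rw [hκ_apply, Measure.smul_apply, smul_eq_mul]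
    rcases eq_or_ne (η c Set.univ) 0 with h0 | h0
    · simp [h0]
    rcases eq_or_ne (η c Set.univ) ⊤ with ht | ht
    · simp [ht]
    rw [ENNReal.inv_mul_cancel h0 ht]
  -- distribution of E
  have hν : True := trivial
  -- per-x change of variables
  have hmapx : ∀ x : S, (P.map E).map (fun u => g (u, x)) = volume.withDensity (fun c => w c x) := by
    intro x
    have hgx_meas : Measurable fun u => g (u, x) :=
      hg_meas.comp (measurable_id.prodMk measurable_const)
    rw [hE_law]
    exact aux_map_withDensity p (fun u => g (u, x)) (fun u => g' (u, x))
      (fun c => gInv (c, x)) hgx_meas (hg_deriv x) (fun u => hg'_pos x u)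
      (hg_mono x) (hg_bij x) (hgInv_left x)
  -- joint law
  set T : ℝ × S → ℝ × S := fun q => (g q, q.2) with hT
  have hT_meas : Measurable T := hg_meas.prodMk measurable_snd
  have hjoint : P.map (fun ω => (C ω, X ω)) = ((P.map E).prod μ).map T := by
    have h1 : (fun ω => (C ω, X ω)) = T ∘ fun ω => (E ω, X ω) := by
      funext ω; simp [hT, hC]
    have hEX : P.map (fun ω => (E ω, X ω)) = (P.map E).prod μ := by
      rw [hμ]
      exact (indepFun_iff_map_prod_eq_prod_map_map hE.aemeasurable hX.aemeasurable).mp hindep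
    rw [h1, ← Measure.map_map hT_meas (hE.prodMk hX), hEX]
  -- rectangle formula
  have hrect : ∀ A B : Set _, MeasurableSet A → MeasurableSet B →
      (((P.map E).prod μ).map T) (A ×ˢ B) = ∫⁻ c in A, η c B := by
    intro A B hA hB
    have hTpre : MeasurableSet (T ⁻¹' (A ×ˢ B)) := hT_meas (hA.prod hB)
    rw [Measure.map_apply hT_meas (hA.prod hB), Measure.prod_apply_symm hTpre]
    have h1 : ∀ x : S, (P.map E) ((fun u => (u, x)) ⁻¹' (T ⁻¹' (A ×ˢ B))) =
        B.indicator (fun x => ∫⁻ c in A, w c x) x := by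
      intro x
      have hset : (fun u => (u, x)) ⁻¹' (T ⁻¹' (A ×ˢ B)) =
          {u | g (u, x) ∈ A ∧ x ∈ B} := by
        ext u; simp [hT]
      have hgx : Measurable (fun u => g (u, x)) :=
        hg_meas.comp (measurable_id.prodMk measurable_const)
      by_cases hx : x ∈ B
      · have hAx : {u | g (u, x) ∈ A ∧ x ∈ B} = (fun u => g (u, x)) ⁻¹' A := by
          ext u; simp [hx, Set.mem_preimage]
        rw [hset, hAx, Set.indicator_of_mem hx,
          ← Measure.map_apply hgx hA, hmapx x, withDensity_apply _ hA]
      · have : {u | g (u, x) ∈ A ∧ x ∈ B} = ∅ := by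
          ext u; simp [hx]
        rw [hset, this, Set.indicator_of_notMem hx, measure_empty]
    simp_rw [h1]
    rw [lintegral_indicator hB]
    have hswap : ∫⁻ x in B, ∫⁻ c in A, w c x ∂volume ∂μ
        = ∫⁻ c in A, ∫⁻ x in B, w c x ∂μ ∂volume := by
      refine lintegral_lintegral_swap ?_
      exact (hw_meas.comp measurable_swap).aemeasurable
    rw [hswap]
    refine setLIntegral_congr_fun hA (fun c _ => ?_)
    rw [hη_apply, withDensity_apply _ hB]
  -- marginal of C
  have hmargC : P.map C = volume.withDensity (fun c => η c Set.univ) := by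
    ext A hA
    have hpre : C ⁻¹' A = (fun ω => (C ω, X ω)) ⁻¹' (A ×ˢ Set.univ) := by
      ext ω; simp
    rw [Measure.map_apply hC_meas hA, hpre,
      ← Measure.map_apply (hC_meas.prodMk hX) (hA.prod MeasurableSet.univ),
      hjoint, hrect A Set.univ hA MeasurableSet.univ, withDensity_apply _ hA]
  -- a.e. finiteness of total mass
  have htotal : ∫⁻ c, η c Set.univ ∂volume = 1 := by
    have := hrect Set.univ Set.univ MeasurableSet.univ MeasurableSet.univ
    rw [Set.univ_prod_univ, ← hjoint] at this
    rw [← setLIntegral_univ, ← this]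
    haveI : IsProbabilityMeasure (P.map fun ω => (C ω, X ω)) :=
      Measure.isProbabilityMeasure_map (hC_meas.prodMk hX).aemeasurable
    simp
  have hfin : ∀ᵐ c ∂(volume : Measure ℝ), η c Set.univ < ⊤ :=
    ae_lt_top (η.measurable_coe MeasurableSet.univ) (by rw [htotal]; exact ENNReal.one_ne_top)
  -- joint = compProd
  haveI : IsProbabilityMeasure (P.map fun ω => (C ω, X ω)) :=
    Measure.isProbabilityMeasure_map (hC_meas.prodMk hX).aemeasurable
  have hcomp : P.map (fun ω => (C ω, X ω)) = (P.map C) ⊗ₘ κ := by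
    refine ext_of_generate_finite _ generateFrom_prod.symm isPiSystem_prod ?_ ?_
    · rintro s ⟨A, hA, B, hB, rfl⟩
      simp only [Set.mem_setOf_eq] at hA hB
      rw [hjoint, hrect A B hA hB, Measure.compProd_apply_prod hA hB, hmargC,
        restrict_withDensity hA, lintegral_withDensity_eq_lintegral_mul _
          (η.measurable_coe MeasurableSet.univ) (κ.measurable_coe hB)]
      refine setLIntegral_congr_fun_ae hA ?_
      filter_upwards [hfin] with c hc _
      rw [Pi.mul_apply, hκ_apply, Measure.smul_apply, smul_eq_mul]
      rcases eq_or_ne (η c Set.univ) 0 with h0 | h0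
      · have hB0 : η c B = 0 := le_antisymm (h0 ▸ measure_mono (Set.subset_univ B)) (zero_le ..)
        rw [h0, hB0, mul_zero, zero_mul]
      · rw [← mul_assoc, ENNReal.mul_inv_cancel h0 hc.ne, one_mul]
    · rw [measure_univ]
      haveI : IsProbabilityMeasure (P.map C) := Measure.isProbabilityMeasure_map hC_meas.aemeasurable
      rw [Measure.compProd_apply MeasurableSet.univ]
      symm
      calc ∫⁻ c, κ c (Prod.mk c ⁻¹' Set.univ) ∂(P.map C)
          = ∫⁻ c, κ c Set.univ ∂(P.map C) := by simp
        _ = 1 := by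
            rw [hmargC, lintegral_withDensity_eq_lintegral_mul _
              (η.measurable_coe MeasurableSet.univ) (κ.measurable_coe MeasurableSet.univ), ← htotal]
            refine lintegral_congr_ae ?_
            filter_upwards [hfin] with c hc
            rw [Pi.mul_apply, hκ_apply, Measure.smul_apply, smul_eq_mul]
            rcases eq_or_ne (η c Set.univ) 0 with h0 | h0
            · rw [h0, zero_mul]
            · rw [← mul_assoc, ENNReal.mul_inv_cancel h0 hc.ne, one_mul]
  have huniq := condDistrib_ae_eq_of_measure_eq_compProd (μ := P) C hX.aemeasurable (κ := κ) hcomp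
  filter_upwards [huniq] with c hc
  rw [hc, hκ_apply, hη_apply]
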